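/- If T⁺ is semistandard, then in every row of T⁻ = Rp(T⁺) the entries strictly decrease from left to right; equivalently, for every i and j, if the j-th and the (j+1)-st occurrences of the symbol m+i in w(T⁺) lie in columns c and c′ of T⁺ respectively, then c > c′. -/
import Mathlib


noncomputable section

/-- A partition, written 1-based: `α i` is the length of row `i` for `i ≥ 1`
(we normalize `α 0 = 0`); it is weakly decreasing and eventually zero. -/
def IsPartition (α : ℕ → ℕ) : Prop :=
  α 0 = 0 ∧ (∀ i j, 1 ≤ i → i ≤ j → α j ≤ α i) ∧ ∃ N, ∀ i, N ≤ i → α i = 0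

/-- The set of cells of the skew diagram `α/β` (rows and columns 1-based):
`(i,j)` with `β i < j ≤ α i`. -/
def cellOf (α β : ℕ → ℕ) : Set (ℕ × ℕ) := {p | β p.1 < p.2 ∧ p.2 ≤ α p.1}

/-- The conjugate partition (1-based): `(conjP α) j = #{i ≥ 1 | α i ≥ j}` for `j ≥ 1`. -/
def conjP (α : ℕ → ℕ) (j : ℕ) : ℕ := Set.ncard {i : ℕ | 1 ≤ i ∧ 1 ≤ j ∧ j ≤ α i}

/-- Semistandard skew tableau: entries weakly increase along rows (left to right) and
strictly increase down columns. -/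
def IsSSkew (α β : ℕ → ℕ) (T : ℕ × ℕ → ℕ) : Prop :=
  (∀ i j j', (i, j) ∈ cellOf α β → (i, j') ∈ cellOf α β → j ≤ j' → T (i, j) ≤ T (i, j')) ∧
  (∀ i i' j, (i, j) ∈ cellOf α β → (i', j) ∈ cellOf α β → i < i' → T (i, j) < T (i', j))

/-- Anti-semistandard skew tableau: entries strictly decrease along rows (left to right)
and weakly decrease down columns. -/
def IsAntiSSkew (α β : ℕ → ℕ) (T : ℕ × ℕ → ℕ) : Prop :=
  (∀ i j j', (i, j) ∈ cellOf α β → (i, j') ∈ cellOf α β → j < j' → T (i, j') < T (i, j)) ∧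
  (∀ i i' j, (i, j) ∈ cellOf α β → (i', j) ∈ cellOf α β → i ≤ i' → T (i', j) ≤ T (i, j))

/-- `wle p q` : cell `p` comes weakly before cell `q` in the reading order of the reading
word (rows top to bottom, inside each row right to left). -/
def wle (p q : ℕ × ℕ) : Prop := p.1 < q.1 ∨ (p.1 = q.1 ∧ q.2 ≤ p.2)

/-- Number of occurrences of the symbol `v` among the cells weakly before `x` in the
reading word of `T` (so "the `j`-th occurrence of `v` in `w(T)` is at the cell `x`" reads
`x ∈ cellOf α β ∧ T x = v ∧ occBefore α β T v x = j`). -/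
def occBefore (α β : ℕ → ℕ) (T : ℕ × ℕ → ℕ) (v : ℕ) (x : ℕ × ℕ) : ℕ :=
  Set.ncard {p | p ∈ cellOf α β ∧ wle p x ∧ T p = v}

/-- Total number of occurrences of the symbol `v` in the skew tableau `T`. -/
def occCount (α β : ℕ → ℕ) (T : ℕ × ℕ → ℕ) (v : ℕ) : ℕ :=
  Set.ncard {p | p ∈ cellOf α β ∧ T p = v}

/-- The reading word of `T` is a lattice word for the symbols `base, base+1, …` :
in every initial segment, `v+1` occurs at most as often as `v`, for every `v ≥ base`. -/
def IsLatticeFrom (α β : ℕ → ℕ) (T : ℕ × ℕ → ℕ) (base : ℕ) : Prop :=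
  ∀ x ∈ cellOf α β, ∀ v, base ≤ v → occBefore α β T (v + 1) x ≤ occBefore α β T v x

/-- `T` (with symbols `m+1, m+2, …`) is shifted Yamanouchi with respect to the shift `ω`:
for every initial segment `w′` of the reading word and every `i ≥ 1`,
`ω i + a_i(w′) ≥ ω (i+1) + a_{i+1}(w′)`. -/
def ShiftedYam (α β : ℕ → ℕ) (m : ℕ) (ω : ℕ → ℕ) (T : ℕ × ℕ → ℕ) : Prop :=
  ∀ x ∈ cellOf α β, ∀ i, 1 ≤ i →
    ω (i + 1) + occBefore α β T (m + i + 1) x ≤ ω i + occBefore α β T (m + i) x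

/-- `Tm = Rp(Tp)` : if the `j`-th occurrence of the symbol `m+i` in the reading word of
`Tp` lies in column `c` of `Tp`, then the entry of `Tm` at the cell `(i, ω i + j)` is `c`. -/
def IsRp (α β : ℕ → ℕ) (m : ℕ) (ω : ℕ → ℕ) (Tp Tm : ℕ × ℕ → ℕ) : Prop :=
  ∀ x ∈ cellOf α β, ∀ i, 1 ≤ i → Tp x = m + i →
    Tm (i, ω i + occBefore α β Tp (m + i) x) = x.2

/-- `λ⁺` : the first `m` rows of `λ`. -/
def lamPlus (m : ℕ) (la : ℕ → ℕ) : ℕ → ℕ := fun i => if i ≤ m then la i else 0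

/-- `λ⁻` : the conjugate of the partition `(λ_{m+1}, λ_{m+2}, …)`. -/
def lamMinus (m : ℕ) (la : ℕ → ℕ) : ℕ → ℕ :=
  conjP (fun i => if 1 ≤ i then la (m + i) else 0)

-- AUX START
lemma wle_trans {p q r : ℕ × ℕ} (h1 : wle p q) (h2 : wle q r) : wle p r := by
  unfold wle at *; omega

lemma wle_total (p q : ℕ × ℕ) : wle p q ∨ wle q p := by unfold wle; omega

lemma wle_antisymm {p q : ℕ × ℕ} (h1 : wle p q) (h2 : wle q p) : p = q := by
  unfold wle at *; rw [Prod.ext_iff]; omega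

lemma conjP_zero (γ : ℕ → ℕ) : conjP γ 0 = 0 := by
  have h : {i : ℕ | 1 ≤ i ∧ 1 ≤ 0 ∧ 0 ≤ γ i} = ∅ := by ext r; simp
  rw [conjP, h, Set.ncard_empty]

lemma conjP_anti {γ : ℕ → ℕ} {i j : ℕ} (h1 : 1 ≤ i) (hij : i ≤ j)
    (hfin : {r : ℕ | 1 ≤ r ∧ 1 ≤ i ∧ i ≤ γ r}.Finite) : conjP γ j ≤ conjP γ i := by
  apply Set.ncard_le_ncard _ hfin
  intro r hr; exact ⟨hr.1, h1, le_trans hij hr.2.2⟩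

lemma occBefore_mono {α β : ℕ → ℕ} {T : ℕ × ℕ → ℕ} {v : ℕ} (hfin : (cellOf α β).Finite)
    {y y' : ℕ × ℕ} (h : wle y y') : occBefore α β T v y ≤ occBefore α β T v y' := by
  apply Set.ncard_le_ncard
  · intro p hp; exact ⟨hp.1, wle_trans hp.2.1 h, hp.2.2⟩
  · exact hfin.subset (fun p hp => hp.1)

lemma key_lt_col {α β : ℕ → ℕ} {T : ℕ × ℕ → ℕ}
    (hα0 : α 0 = 0) (hαa : ∀ i j, 1 ≤ i → i ≤ j → α j ≤ α i)
    (hfin : (cellOf α β).Finite) (hss : IsSSkew α β T)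
    {v : ℕ} {x x' : ℕ × ℕ} (hx : x ∈ cellOf α β) (hx' : x' ∈ cellOf α β)
    (hTx : T x = v) (hTx' : T x' = v)
    (hlt : occBefore α β T v x < occBefore α β T v x') : x'.2 < x.2 := by
  have hne : x ≠ x' := by rintro rfl; exact lt_irrefl _ hlt
  have hw : wle x x' := (wle_total x x').resolve_right
    (fun h => absurd (occBefore_mono (T := T) (v := v) hfin h) (by omega))
  obtain ⟨hbx, hax⟩ := hx
  obtain ⟨hbx', hax'⟩ := hx'
  rcases hw with hlt1 | ⟨heq, hle⟩
  · by_contra hc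
    push_neg at hc
    have h1 : 1 ≤ x.1 := by
      by_contra h0
      push_neg at h0
      have e : x.1 = 0 := by omega
      rw [e, hα0] at hax; omega
    have cell2 : (x.1, x'.2) ∈ cellOf α β :=
      ⟨lt_of_lt_of_le hbx hc, le_trans hax' (hαa x.1 x'.1 h1 (le_of_lt hlt1))⟩
    have i1 : v ≤ T (x.1, x'.2) := by
      have := hss.1 x.1 x.2 x'.2 ⟨hbx, hax⟩ cell2 hc
      rwa [Prod.mk.eta, hTx] at this
    have i2 : T (x.1, x'.2) < v := by
      have := hss.2 x.1 x'.1 x'.2 cell2 ⟨hbx', hax'⟩ hlt1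
      rwa [Prod.mk.eta, hTx'] at this
    omega
  · rcases eq_or_lt_of_le hle with he | h
    · exact absurd (Prod.ext_iff.mpr ⟨heq, he.symm⟩) hne
    · exact h

lemma rank_exists {L : Type*} [LinearOrder L] (t : Finset L) (j : ℕ) (h1 : 1 ≤ j)
    (h2 : j ≤ t.card) : ∃ q ∈ t, (t.filter (fun a => a ≤ q)).card = j := by
  have hk : j - 1 < t.card := by omega
  set e := t.orderIsoOfFin rfl with he
  refine ⟨e ⟨j - 1, hk⟩, (e ⟨j - 1, hk⟩).2, ?_⟩
  have himg : t.filter (fun a => a ≤ (e ⟨j - 1, hk⟩ : L)) =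
      (Finset.Iic (⟨j - 1, hk⟩ : Fin t.card)).image (fun k => (e k : L)) := by
    ext a
    simp only [Finset.mem_filter, Finset.mem_image, Finset.mem_Iic]
    constructor
    · rintro ⟨ha, hle⟩
      refine ⟨e.symm ⟨a, ha⟩, ?_, by simp⟩
      rw [OrderIso.symm_apply_le]
      exact_mod_cast hle
    · rintro ⟨k, hk2, rfl⟩
      refine ⟨(e k).2, ?_⟩
      exact_mod_cast e.le_iff_le.mpr hk2
  rw [himg, Finset.card_image_of_injective _ (fun k k' hkk => e.injective (Subtype.ext hkk)),
    Fin.card_Iic]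
  show j - 1 + 1 = j
  omega

def rkey (p : ℕ × ℕ) : Lex (ℕ × ℕᵒᵈ) := toLex (p.1, OrderDual.toDual p.2)

lemma rkey_le_iff {p q : ℕ × ℕ} : rkey p ≤ rkey q ↔ wle p q := by
  simp [rkey, Prod.Lex.le_iff, wle]

lemma rkey_inj : Function.Injective rkey := fun p q h =>
  wle_antisymm (rkey_le_iff.mp h.le) (rkey_le_iff.mp h.ge)

lemma occ_exists {α β : ℕ → ℕ} {T : ℕ × ℕ → ℕ} {v : ℕ} (hfin : (cellOf α β).Finite)
    {j : ℕ} (h1 : 1 ≤ j) (h2 : j ≤ occCount α β T v) :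
    ∃ x ∈ cellOf α β, T x = v ∧ occBefore α β T v x = j := by
  classical
  have hS : {p | p ∈ cellOf α β ∧ T p = v}.Finite := hfin.subset fun p hp => hp.1
  set Fs := hS.toFinset with hFs
  have hcard : Fs.card = occCount α β T v := by
    rw [occCount, ← Set.ncard_coe_finset, hS.coe_toFinset]
  obtain ⟨q, hq, hcardq⟩ := rank_exists (Fs.image rkey) j h1 (by
    rw [Finset.card_image_of_injective _ rkey_inj, hcard]; exact h2)
  obtain ⟨x, hxFs, rfl⟩ := Finset.mem_image.mp hq
  have hxS := hS.mem_toFinset.mp hxFs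
  refine ⟨x, hxS.1, hxS.2, ?_⟩
  have hset : {p | p ∈ cellOf α β ∧ wle p x ∧ T p = v} =
      ↑(Fs.filter fun p => wle p x) := by
    ext p
    simp only [Finset.coe_filter, Set.mem_setOf_eq, hFs, Set.Finite.mem_toFinset]
    tauto
  rw [occBefore, hset, Set.ncard_coe_finset, ← hcardq, Finset.filter_image,
    Finset.card_image_of_injective _ rkey_inj]
  congr 1
  ext p
  simp [rkey_le_iff]

lemma cellOf_finite {α β : ℕ → ℕ} {R C : ℕ} (hR : ∀ i, R < i → α i = 0)
    (hC : ∀ i, α i ≤ C) : (cellOf α β).Finite := by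
  apply Set.Finite.subset (Set.finite_Icc ((0, 0) : ℕ × ℕ) (R, C))
  rintro ⟨i, j⟩ ⟨h1, h2⟩
  simp only [Set.mem_Icc, Prod.mk_le_mk]
  have hj : j ≤ C := le_trans h2 (hC i)
  have hi : i ≤ R := by
    by_contra hcon
    push_neg at hcon
    have := hR i hcon
    simp only at h1 h2
    omega
  exact ⟨⟨Nat.zero_le _, Nat.zero_le _⟩, hi, hj⟩

/-- if `T⁺` is semistandard then in every row of `T⁻ = Rp(T⁺)` the entries
strictly decrease from left to right; equivalently, consecutive occurrences of a symbol
`m+i` in the reading word of `T⁺` lie in strictly decreasing columns. -/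
theorem statement11 (m n : ℕ) (hm : 1 ≤ m) (hn : 1 ≤ n) (la μ ν : ℕ → ℕ)
    (hla : IsPartition la) (hook : la (m + 1) ≤ n)
    (hμ : IsPartition μ) (hμl : ∀ i, μ i ≤ lamPlus m la i)
    (hν : IsPartition ν) (hνω : ∀ i, lamMinus m la i ≤ ν i)
    (Tp : ℕ × ℕ → ℕ)
    (hrange : ∀ p ∈ cellOf (conjP (lamPlus m la)) (conjP μ),
      m + 1 ≤ Tp p ∧ Tp p ≤ m + n)
    (hcont : ∀ i, 1 ≤ i →
      occCount (conjP (lamPlus m la)) (conjP μ) Tp (m + i) = ν i - lamMinus m la i)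
    (hss : IsSSkew (conjP (lamPlus m la)) (conjP μ) Tp)
    (Tm : ℕ × ℕ → ℕ)
    (hRp : IsRp (conjP (lamPlus m la)) (conjP μ) m (lamMinus m la) Tp Tm) :
    (∀ i c c', (i, c) ∈ cellOf ν (lamMinus m la) → (i, c') ∈ cellOf ν (lamMinus m la) →
        c < c' → Tm (i, c') < Tm (i, c)) ∧
      ∀ i, 1 ≤ i → ∀ x x', x ∈ cellOf (conjP (lamPlus m la)) (conjP μ) →
        x' ∈ cellOf (conjP (lamPlus m la)) (conjP μ) →
        Tp x = m + i → Tp x' = m + i →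
        occBefore (conjP (lamPlus m la)) (conjP μ) Tp (m + i) x' =
          occBefore (conjP (lamPlus m la)) (conjP μ) Tp (m + i) x + 1 →
        x'.2 < x.2 := by
  classical
  obtain ⟨hla0, hlaa, N, hlaN⟩ := hla
  set α := conjP (lamPlus m la) with hαdef
  set β := conjP μ with hβdef
  set ω := lamMinus m la with hωdef
  have hlpbound : ∀ r, lamPlus m la r ≤ la 1 := by
    intro r
    unfold lamPlus
    split
    · rcases Nat.eq_zero_or_pos r with rfl | hr
      · rw [hla0]; exact Nat.zero_le _
      · exact hlaa 1 r le_rfl hr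
    · exact Nat.zero_le _
  have hfinIcc : ∀ i, {r : ℕ | 1 ≤ r ∧ 1 ≤ i ∧ i ≤ lamPlus m la r} ⊆ Set.Icc 1 m := by
    intro i r hr
    obtain ⟨h1, h2, h3⟩ := hr
    refine ⟨h1, ?_⟩
    by_contra hcon
    push_neg at hcon
    have : lamPlus m la r = 0 := by unfold lamPlus; rw [if_neg (by omega)]
    omega
  have hαC : ∀ i, α i ≤ m := by
    intro i
    rcases Nat.eq_zero_or_pos i with rfl | hi
    · rw [hαdef, conjP_zero]; exact Nat.zero_le _
    · rw [hαdef, conjP]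
      calc Set.ncard {r : ℕ | 1 ≤ r ∧ 1 ≤ i ∧ i ≤ lamPlus m la r}
          ≤ (Set.Icc 1 m).ncard :=
            Set.ncard_le_ncard (hfinIcc i) (Set.finite_Icc 1 m)
        _ = m := by
            rw [← Finset.coe_Icc, Set.ncard_coe_finset, Nat.card_Icc]
            omega
  have hαR : ∀ i, la 1 < i → α i = 0 := by
    intro i hi
    rw [hαdef, conjP]
    have h : {r : ℕ | 1 ≤ r ∧ 1 ≤ i ∧ i ≤ lamPlus m la r} = ∅ := by
      ext r
      simp only [Set.mem_setOf_eq, Set.mem_empty_iff_false, iff_false, not_and]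
      intro _ _
      have := hlpbound r
      omega
    rw [h, Set.ncard_empty]
  have hα0 : α 0 = 0 := conjP_zero _
  have hαa : ∀ i j, 1 ≤ i → i ≤ j → α j ≤ α i := by
    intro i j h1 hij
    exact conjP_anti h1 hij ((Set.finite_Icc 1 m).subset (hfinIcc i))
  have hfin : (cellOf α β).Finite := cellOf_finite hαR hαC
  have keyD : ∀ v x x', x ∈ cellOf α β → x' ∈ cellOf α β → Tp x = v → Tp x' = v →
      occBefore α β Tp v x < occBefore α β Tp v x' → x'.2 < x.2 :=
    fun v x x' hx hx' h1 h2 h3 => key_lt_col hα0 hαa hfin hss hx hx' h1 h2 h3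
  constructor
  · intro i c c' hc hc' hcc
    obtain ⟨hc1, hc2⟩ := hc
    obtain ⟨hc1', hc2'⟩ := hc'
    simp only at hc1 hc2 hc1' hc2'
    have hi : 1 ≤ i := by
      rcases Nat.eq_zero_or_pos i with rfl | h
      · rw [hν.1] at hc2; omega
      · exact h
    have hcount := hcont i hi
    obtain ⟨x, hx, hTx, hocc⟩ := occ_exists (T := Tp) (v := m + i) hfin
      (j := c - ω i) (by omega) (by rw [hcount]; omega)
    obtain ⟨x', hx', hTx', hocc'⟩ := occ_exists (T := Tp) (v := m + i) hfin
      (j := c' - ω i) (by omega) (by rw [hcount]; omega)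
    have e1 := hRp x hx i hi hTx
    have e2 := hRp x' hx' i hi hTx'
    rw [hocc, show ω i + (c - ω i) = c by omega] at e1
    rw [hocc', show ω i + (c' - ω i) = c' by omega] at e2
    rw [e1, e2]
    exact keyD (m + i) x x' hx hx' hTx hTx' (by omega)
  · intro i hi x x' hx hx' hTx hTx' hsucc
    exact keyD (m + i) x x' hx hx' hTx hTx' (by omega)
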